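/- The balance-gain function is not submodular: there exist a signed graph H = ((V,E), σ), edge sets S ⊆ T ⊆ E, and an edge e ∈ E \ T such that f(S ∪ {e}) − f(S) < f(T ∪ {e}) − f(T), where f(B) = Δ(H_B) − Δ(H). -/

import Mathlib

open Matrix Finset

attribute [local instance 10] Classical.propDecidable

variable {V : Type*}

/-- The signed Laplacian of a signed graph `(G, σ)`: diagonal entries are vertex degrees,
and for `i ≠ j` the entry is `-σ i j` if `(i,j)` is an edge and `0` otherwise. -/
noncomputable def signedLaplacian [Fintype V] [DecidableEq V] (G : SimpleGraph V)
    (σ : V → V → ℝ) : Matrix V V ℝ :=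
  Matrix.of fun i j =>
    if i = j then (G.degree i : ℝ) else if G.Adj i j then -σ i j else 0

/-- A signed graph is balanced if the vertices can be partitioned into `S` and `Sᶜ` so that
edges inside a part are positive and edges across parts are negative. -/
def IsBalanced (G : SimpleGraph V) (σ : V → V → ℝ) : Prop :=
  ∃ S : Set V, ∀ i j, G.Adj i j → (σ i j = 1 ↔ (i ∈ S ↔ j ∈ S))

/-- The induced (signed) subgraph on vertex set `W` is balanced. -/
def IsBalancedOn (G : SimpleGraph V) (σ : V → V → ℝ) (W : Set V) : Prop :=
  ∃ S : Set V, ∀ i ∈ W, ∀ j ∈ W, G.Adj i j → (σ i j = 1 ↔ (i ∈ S ↔ j ∈ S))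

/-- Current balance `Δ`: the maximum number of vertices of an induced subgraph that is
connected and balanced. -/
noncomputable def currentBalance [Fintype V] (G : SimpleGraph V) (σ : V → V → ℝ) : ℕ :=
  sSup {k : ℕ | ∃ W : Set V, W.ncard = k ∧ (G.induce W).Connected ∧ IsBalancedOn G σ W}

/-- Frustration number `ν`: minimum number of vertices whose deletion leaves a balanced graph. -/
noncomputable def frustrationNumber [Fintype V] (G : SimpleGraph V) (σ : V → V → ℝ) : ℕ :=
  sInf {k : ℕ | ∃ D : Set V, D.ncard = k ∧ IsBalancedOn G σ Dᶜ}

/-- Frustration index `ε`: minimum number of edges whose deletion leaves a balanced graph. -/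
noncomputable def frustrationIndex [Fintype V] (G : SimpleGraph V) (σ : V → V → ℝ) : ℕ :=
  sInf {k : ℕ | ∃ X : Set (Sym2 V), X ⊆ G.edgeSet ∧ X.ncard = k ∧
    IsBalanced (G.deleteEdges X) σ}

/-- The smallest eigenvalue of a Hermitian (real symmetric) matrix. -/
noncomputable def smallestEigenvalue [Fintype V] [DecidableEq V] {A : Matrix V V ℝ}
    (hA : A.IsHermitian) : ℝ :=
  ⨅ i, hA.eigenvalues i

/-- The function on unordered edges `{i, j} ↦ (v i - σ i j * v j)^2`. -/
noncomputable def edgeWeight (σ : V → V → ℝ) (hsym : ∀ i j, σ i j = σ j i)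
    (hsign : ∀ i j, σ i j = 1 ∨ σ i j = -1) (v : V → ℝ) : Sym2 V → ℝ :=
  Sym2.lift ⟨fun i j => (v i - σ i j * v j) ^ 2, fun a b => by
    show (v a - σ a b * v b) ^ 2 = (v b - σ b a * v a) ^ 2
    rw [hsym b a]
    rcases hsign a b with h | h <;> rw [h] <;> ring⟩

/-- The balance-gain function `f(B) = Δ(H_B) − Δ(H)` (valued in `ℤ`). -/
noncomputable def balanceGain [Fintype V] (G : SimpleGraph V) (σ : V → V → ℝ)
    (B : Finset (Sym2 V)) : ℤ :=
  (currentBalance (G.deleteEdges ↑B) σ : ℤ) - (currentBalance G σ : ℤ)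

section Aux

open SimpleGraph

/-- Lower bound on `currentBalance` from a witness. -/
lemma cb_ge [Fintype V] (G : SimpleGraph V) (σ : V → V → ℝ) (W : Set V)
    (h1 : (G.induce W).Connected) (h2 : IsBalancedOn G σ W) :
    W.ncard ≤ currentBalance G σ := by
  apply le_csSup
  · refine ⟨Nat.card V, ?_⟩
    rintro k ⟨W, rfl, -, -⟩
    calc W.ncard ≤ (Set.univ : Set V).ncard :=
          Set.ncard_le_ncard (Set.subset_univ W) Set.finite_univ
      _ = Nat.card V := Set.ncard_univ V
  · exact ⟨W, rfl, h1, h2⟩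

/-- Upper bound on `currentBalance`. -/
lemma cb_le [Fintype V] [Nonempty V] (G : SimpleGraph V) (σ : V → V → ℝ) (m : ℕ)
    (hm : 1 ≤ m)
    (h : ∀ W : Set V, (G.induce W).Connected → IsBalancedOn G σ W → W.ncard ≤ m) :
    currentBalance G σ ≤ m := by
  apply csSup_le
  · obtain ⟨v⟩ := ‹Nonempty V›
    refine ⟨1, {v}, Set.ncard_singleton v, ?_, ⟨Set.univ, ?_⟩⟩
    · rw [SimpleGraph.connected_iff]
      refine ⟨?_, ⟨⟨v, rfl⟩⟩⟩
      intro u w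
      have : u = w := Subtype.ext (u.2.trans w.2.symm)
      rw [this]
    · intro i hi j hj hadj
      rw [Set.mem_singleton_iff] at hi hj
      rw [hi, hj] at hadj
      exact absurd hadj (G.loopless.irrefl v)
  · rintro k ⟨W, rfl, hc, hb⟩
    exact h W hc hb

def myE : Finset (Sym2 (Fin 4)) := {s(0,1), s(1,2), s(0,2), s(2,3), s(0,3)}

def myG : SimpleGraph (Fin 4) where
  Adj i j := s(i,j) ∈ myE
  symm := by constructor; intro i j h; rwa [Sym2.eq_swap] at h
  loopless := by constructor; intro i; fin_cases i <;> decide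

instance : DecidableRel myG.Adj := fun i j => inferInstanceAs (Decidable (s(i,j) ∈ myE))

instance (X : Finset (Sym2 (Fin 4))) : DecidableRel (myG.deleteEdges ↑X).Adj := fun i j =>
  decidable_of_iff (myG.Adj i j ∧ s(i,j) ∉ X)
    (by rw [SimpleGraph.deleteEdges_adj]; simp)

noncomputable def myσ (a b : Fin 4) : ℝ :=
  if s(a,b) = s(0,1) ∨ s(a,b) = s((2:Fin 4),3) then -1 else 1

lemma myσ_pos {a b : Fin 4} (h : ¬(s(a,b) = s(0,1) ∨ s(a,b) = s((2:Fin 4),3))) :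
    myσ a b = 1 := by rw [myσ, if_neg h]

lemma myσ_neg {a b : Fin 4} (h : s(a,b) = s(0,1) ∨ s(a,b) = s((2:Fin 4),3)) :
    myσ a b = -1 := by rw [myσ, if_pos h]

/-- `Δ(H) ≥ 3` via the path 1 - 0 - 3. -/
lemma cb_myG_ge : 3 ≤ currentBalance myG myσ := by
  have h := cb_ge myG myσ {0, 1, 3} ?_ ?_
  · rwa [show ({0,1,3} : Set (Fin 4)) = ↑({0,1,3} : Finset (Fin 4)) by simp,
      Set.ncard_coe_finset, show ({0,1,3} : Finset (Fin 4)).card = 3 by decide] at h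
  · rw [SimpleGraph.connected_iff]
    have h0 : (0 : Fin 4) ∈ ({0,1,3} : Set (Fin 4)) := by simp
    refine ⟨?_, ⟨⟨0, h0⟩⟩⟩
    have key : ∀ u : ({0,1,3} : Set (Fin 4)), (myG.induce _).Reachable u ⟨0, h0⟩ := by
      rintro ⟨x, hx⟩
      simp only [Set.mem_insert_iff, Set.mem_singleton_iff] at hx
      rcases hx with rfl | rfl | rfl
      · exact SimpleGraph.Reachable.refl _
      · exact SimpleGraph.Adj.reachable ((by decide : myG.Adj 1 0) : _)
      · exact SimpleGraph.Adj.reachable ((by decide : myG.Adj 3 0) : _)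
    exact fun u v => (key u).trans (key v).symm
  · refine ⟨{1}, ?_⟩
    intro i hi j hj hadj
    simp only [Set.mem_insert_iff, Set.mem_singleton_iff] at hi hj
    rcases hi with rfl | rfl | rfl <;> rcases hj with rfl | rfl | rfl <;>
      first
        | exact absurd hadj (by decide)
        | (rw [myσ_neg (by decide)]; simp only [Set.mem_singleton_iff]; norm_num <;> decide)
        | (rw [myσ_pos (by decide)]; simp only [Set.mem_singleton_iff]; norm_num <;> decide)

/-- `Δ(H_{T∪e}) ≥ 4`: after deleting both negative edges everything is balanced. -/
lemma cb_D_ge : 4 ≤ currentBalance (myG.deleteEdges ↑({s(2,3),s(0,1)} : Finset (Sym2 (Fin 4)))) myσ := by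
  set G' := myG.deleteEdges ↑({s(2,3),s(0,1)} : Finset (Sym2 (Fin 4))) with hG'
  have h := cb_ge G' myσ Set.univ ?_ ?_
  · rwa [Set.ncard_univ, Nat.card_eq_fintype_card, Fintype.card_fin] at h
  · rw [SimpleGraph.connected_iff]
    refine ⟨?_, ⟨⟨0, trivial⟩⟩⟩
    have adj20 : (G'.induce Set.univ).Adj ⟨2, trivial⟩ ⟨0, trivial⟩ := by
      rw [SimpleGraph.comap_adj]; decide
    have adj30 : (G'.induce Set.univ).Adj ⟨3, trivial⟩ ⟨0, trivial⟩ := by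
      rw [SimpleGraph.comap_adj]; decide
    have adj12 : (G'.induce Set.univ).Adj ⟨1, trivial⟩ ⟨2, trivial⟩ := by
      rw [SimpleGraph.comap_adj]; decide
    have key : ∀ u : (Set.univ : Set (Fin 4)), (G'.induce _).Reachable u ⟨0, trivial⟩ := by
      rintro ⟨x, hx⟩
      fin_cases x
      · exact SimpleGraph.Reachable.refl _
      · exact (adj12.reachable).trans adj20.reachable
      · exact adj20.reachable
      · exact adj30.reachable
    exact fun u v => (key u).trans (key v).symm
  · refine ⟨∅, ?_⟩
    intro i _ j _ hadj
    have hσ : myσ i j = 1 := by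
      apply myσ_pos
      rw [SimpleGraph.deleteEdges_adj] at hadj
      intro hc
      exact hadj.2 (by rcases hc with h | h <;> rw [h] <;> simp)
    rw [hσ]
    simp

/-- Generic upper bound: if the whole graph restricted to `univ` is unbalanced,
then `Δ ≤ 3`. -/
lemma cb_le_three (G : SimpleGraph (Fin 4)) (σ : Fin 4 → Fin 4 → ℝ)
    (h : ¬ IsBalancedOn G σ Set.univ) : currentBalance G σ ≤ 3 := by
  apply cb_le G σ 3 (by norm_num)
  intro W hc hb
  by_contra hlt
  push_neg at hlt
  have hW : W = Set.univ := by
    apply Set.eq_of_subset_of_ncard_le (Set.subset_univ W)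
    rw [Set.ncard_univ, Nat.card_eq_fintype_card, Fintype.card_fin]
    omega
  rw [hW] at hb
  exact h hb

lemma unbal_B : ¬ IsBalancedOn (myG.deleteEdges ↑({s(0,1)} : Finset (Sym2 (Fin 4)))) myσ Set.univ := by
  rintro ⟨S, hS⟩
  have h02 := hS 0 trivial 2 trivial (by decide)
  have h03 := hS 0 trivial 3 trivial (by decide)
  have h23 := hS 2 trivial 3 trivial (by decide)
  rw [myσ_pos (by decide)] at h02 h03
  rw [myσ_neg (by decide)] at h23
  have e02 := h02.mp rfl
  have e03 := h03.mp rfl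
  have e23 : ¬((2:Fin 4) ∈ S ↔ (3:Fin 4) ∈ S) := fun hc => by norm_num at h23; exact h23 hc
  exact e23 (e02.symm.trans e03)

lemma unbal_C : ¬ IsBalancedOn (myG.deleteEdges ↑({s(2,3)} : Finset (Sym2 (Fin 4)))) myσ Set.univ := by
  rintro ⟨S, hS⟩
  have h02 := hS 0 trivial 2 trivial (by decide)
  have h12 := hS 1 trivial 2 trivial (by decide)
  have h01 := hS 0 trivial 1 trivial (by decide)
  rw [myσ_pos (by decide)] at h02 h12
  rw [myσ_neg (by decide)] at h01
  have e02 := h02.mp rfl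
  have e12 := h12.mp rfl
  have e01 : ¬((0:Fin 4) ∈ S ↔ (1:Fin 4) ∈ S) := fun hc => by norm_num at h01; exact h01 hc
  exact e01 (e02.trans e12.symm)

end Aux

/-- The balance-gain function is not submodular: there exist a signed
graph `H`, edge sets `S ⊆ T ⊆ E` and an edge `e ∈ E \ T` with
`f(S ∪ {e}) − f(S) < f(T ∪ {e}) − f(T)`. -/
theorem balanceGain_not_submodular :
    ∃ (n : ℕ) (G : SimpleGraph (Fin n)) (σ : Fin n → Fin n → ℝ),
      (∀ a b, σ a b = σ b a) ∧ (∀ a b, σ a b = 1 ∨ σ a b = -1) ∧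
      ∃ (S T : Finset (Sym2 (Fin n))) (e : Sym2 (Fin n)),
        S ⊆ T ∧ ↑T ⊆ G.edgeSet ∧ e ∈ G.edgeSet ∧ e ∉ T ∧
        balanceGain G σ (S ∪ {e}) - balanceGain G σ S <
          balanceGain G σ (T ∪ {e}) - balanceGain G σ T := by
  refine ⟨4, myG, myσ, ?_, ?_, ∅, {s(2,3)}, s(0,1), Finset.empty_subset _, ?_, ?_, by decide, ?_⟩
  · intro a b
    rw [myσ, myσ, Sym2.eq_swap]
  · intro a b
    rw [myσ]
    split_ifs <;> simp
  · intro x hx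
    simp only [Finset.coe_singleton, Set.mem_singleton_iff] at hx
    subst hx
    rw [SimpleGraph.mem_edgeSet]
    decide
  · rw [SimpleGraph.mem_edgeSet]
    decide
  · have hA := cb_myG_ge
    have hB := cb_le_three _ _ unbal_B
    have hC := cb_le_three _ _ unbal_C
    have hD := cb_D_ge
    have hTe : ({s(2,3)} ∪ {s(0,1)} : Finset (Sym2 (Fin 4))) = {s(2,3), s(0,1)} := by decide
    simp only [balanceGain, Finset.empty_union, Finset.coe_empty,
      SimpleGraph.deleteEdges_empty, hTe]
    omega
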